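/- Given two positive C-RASP programs P and P' with L(P) ≠ L(P'), there exists a distinguishing string (a string in the symmetric difference of L(P) and L(P')) of length at most exponential in |P| + |P'|. -/

import Mathlib

inductive CmpOp : Type
  | lt | le | eq | ge | gt

def CmpOp.holds : CmpOp → ℤ → ℤ → Bool
  | .lt, x, y => decide (x < y)
  | .le, x, y => decide (x ≤ y)
  | .eq, x, y => decide (x = y)
  | .ge, x, y => decide (y ≤ x)
  | .gt, x, y => decide (y < x)

mutual
inductive CForm (α : Type) : Type
  | sym : α → CForm α
  | not : CForm α → CForm α
  | and : CForm α → CForm α → CForm α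
  | prev : CForm α → CForm α
  | hist : CForm α → CForm α
  | cmp : CTerm α → CmpOp → ℤ → CForm α
inductive CTerm (α : Type) : Type
  | const : ℤ → CTerm α
  | cnt : CForm α → CTerm α
  | add : CTerm α → CTerm α → CTerm α
  | smul : ℤ → CTerm α → CTerm α
end

mutual
def CForm.eval {α : Type} [DecidableEq α] : CForm α → List α → ℕ → Bool
  | .sym a, w, i => w[i - 1]? == some a
  | .not φ, w, i => !(φ.eval w i)
  | .and φ ψ, w, i => φ.eval w i && ψ.eval w i
  | .prev φ, w, i => ((List.range i).filter (fun j => 0 < j)).any (fun j => φ.eval w j)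
  | .hist φ, w, i => ((List.range (i + 1)).filter (fun j => 0 < j)).all (fun j => φ.eval w j)
  | .cmp t op k, w, i => op.holds (t.eval w i) k
def CTerm.eval {α : Type} [DecidableEq α] : CTerm α → List α → ℕ → ℤ
  | .const c, _, _ => c
  | .cnt φ, w, i =>
      ((((List.range (i + 1)).filter (fun j => 0 < j)).countP (fun j => φ.eval w j) : ℕ) : ℤ)
  | .add t u, w, i => t.eval w i + u.eval w i
  | .smul a t, w, i => a * t.eval w i
end

def CForm.lang {α : Type} [DecidableEq α] (φ : CForm α) : Set (List α) :=
  {w | φ.eval w w.length = true}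

mutual
def CForm.depth {α : Type} : CForm α → ℕ
  | .sym _ => 0
  | .not φ => φ.depth
  | .and φ ψ => max φ.depth ψ.depth
  | .prev φ => φ.depth + 1
  | .hist φ => φ.depth + 1
  | .cmp t _ _ => t.depth
def CTerm.depth {α : Type} : CTerm α → ℕ
  | .const _ => 0
  | .cnt φ => φ.depth + 1
  | .add t u => max t.depth u.depth
  | .smul _ t => t.depth
end

def trueF {α : Type} : CForm α := .cmp (.const 0) .eq 0

def conjList {α : Type} (l : List (CForm α)) : CForm α := l.foldr .and trueF


/-- Number of bits of an integer constant (constants are encoded in binary). -/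
def zsize (z : ℤ) : ℕ := Nat.log 2 z.natAbs + 1

mutual
/-- Size of a formula, with constants counted in binary. -/
def CForm.size {α : Type} : CForm α → ℕ
  | .sym _ => 1
  | .not φ => φ.size + 1
  | .and φ ψ => φ.size + ψ.size + 1
  | .prev φ => φ.size + 1
  | .hist φ => φ.size + 1
  | .cmp t _ k => t.size + zsize k + 1
def CTerm.size {α : Type} : CTerm α → ℕ
  | .const c => zsize c + 1
  | .cnt φ => φ.size + 1
  | .add t u => t.size + u.size + 1
  | .smul a t => zsize a + t.size + 1
end

mutual
/-- Precision: number of bits of the largest constant occurring. -/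
def CForm.prec {α : Type} : CForm α → ℕ
  | .sym _ => 0
  | .not φ => φ.prec
  | .and φ ψ => max φ.prec ψ.prec
  | .prev φ => φ.prec
  | .hist φ => φ.prec
  | .cmp t _ k => max t.prec (zsize k)
def CTerm.prec {α : Type} : CTerm α → ℕ
  | .const c => zsize c
  | .cnt φ => φ.prec
  | .add t u => max t.prec u.prec
  | .smul a t => max (zsize a) t.prec
end

/-- Number of summands of a term. -/
def CTerm.summands {α : Type} : CTerm α → ℕ
  | .const _ => 1
  | .cnt _ => 1
  | .add t u => t.summands + u.summands
  | .smul _ t => t.summands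

mutual
/-- Girth: the maximum number of summands occurring in any sum. -/
def CForm.girth {α : Type} : CForm α → ℕ
  | .sym _ => 0
  | .not φ => φ.girth
  | .and φ ψ => max φ.girth ψ.girth
  | .prev φ => φ.girth
  | .hist φ => φ.girth
  | .cmp t _ _ => max t.girthIn t.summands
def CTerm.girthIn {α : Type} : CTerm α → ℕ
  | .const _ => 0
  | .cnt φ => φ.girth
  | .add t u => max t.girthIn u.girthIn
  | .smul _ t => t.girthIn
end

mutual
/-- The positive fragment C-RASP₊: no temporal operators, and all coefficients and
constants are natural numbers. -/
def CForm.Positive {α : Type} : CForm α → Prop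
  | .sym _ => True
  | .not φ => φ.Positive
  | .and φ ψ => φ.Positive ∧ ψ.Positive
  | .prev _ => False
  | .hist _ => False
  | .cmp t _ k => t.Positive ∧ 0 ≤ k
def CTerm.Positive {α : Type} : CTerm α → Prop
  | .const c => 0 ≤ c
  | .cnt φ => φ.Positive
  | .add t u => t.Positive ∧ u.Positive
  | .smul a t => 0 ≤ a ∧ t.Positive
end

/-- Formulas of the unary past temporal logic TL[◆]. -/
inductive TForm (α : Type) : Type
  | sym : α → TForm α
  | not : TForm α → TForm α
  | and : TForm α → TForm α → TForm α
  | prev : TForm α → TForm α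
  | hist : TForm α → TForm α

def TForm.eval {α : Type} [DecidableEq α] : TForm α → List α → ℕ → Bool
  | .sym a, w, i => w[i - 1]? == some a
  | .not φ, w, i => !(φ.eval w i)
  | .and φ ψ, w, i => φ.eval w i && ψ.eval w i
  | .prev φ, w, i => ((List.range i).filter (fun j => 0 < j)).any (fun j => φ.eval w j)
  | .hist φ, w, i => ((List.range (i + 1)).filter (fun j => 0 < j)).all (fun j => φ.eval w j)

def TForm.lang {α : Type} [DecidableEq α] (φ : TForm α) : Set (List α) :=
  {w | φ.eval w w.length = true}

def TForm.size {α : Type} : TForm α → ℕ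
  | .sym _ => 1
  | .not φ => φ.size + 1
  | .and φ ψ => φ.size + ψ.size + 1
  | .prev φ => φ.size + 1
  | .hist φ => φ.size + 1


section AuxDev
variable {α : Type} [DecidableEq α]

/-- The count as a natural number. -/
def cntN [DecidableEq α] (φ : CForm α) (w : List α) (i : ℕ) : ℕ :=
  ((List.range (i + 1)).filter (fun j => 0 < j)).countP (fun j => φ.eval w j)

lemma cnt_eval (φ : CForm α) (w : List α) (i : ℕ) :
    (CTerm.cnt φ).eval w i = (cntN φ w i : ℤ) := rfl

lemma cntN_succ (φ : CForm α) (w : List α) (i : ℕ) :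
    cntN φ w (i + 1) = cntN φ w i + (if φ.eval w (i + 1) then 1 else 0) := by
  unfold cntN
  rw [List.range_succ, List.filter_append, List.countP_append]
  simp [List.countP_cons]

lemma cntN_mono (φ : CForm α) (w : List α) {i i' : ℕ} (h : i ≤ i') :
    cntN φ w i ≤ cntN φ w i' := by
  induction i' with
  | zero => simp [Nat.le_zero.mp h]
  | succ n ih =>
      rcases Nat.lt_or_ge i (n+1) with h' | h'
      · have := ih (by omega)
        rw [cntN_succ]
        split <;> omega
      · have : i = n + 1 := by omega
        simp [this]

lemma term_mono : ∀ (t : CTerm α), t.Positive → ∀ (w : List α) {i i' : ℕ}, i ≤ i' →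
    t.eval w i ≤ t.eval w i'
  | .const c, _, w, i, i', h => le_refl _
  | .cnt φ, _, w, i, i', h => by
      simp only [cnt_eval]; exact_mod_cast cntN_mono φ w h
  | .add t u, hpos, w, i, i', h => by
      have h1 := term_mono t hpos.1 w h
      have h2 := term_mono u hpos.2 w h
      simp only [CTerm.eval]; omega
  | .smul a t, hpos, w, i, i', h => by
      have h1 := term_mono t hpos.2 w h
      simp only [CTerm.eval]
      exact mul_le_mul_of_nonneg_left h1 hpos.1

lemma term_nonneg : ∀ (t : CTerm α), t.Positive → ∀ (w : List α) (i : ℕ), 0 ≤ t.eval w i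
  | .const c, hpos, w, i => hpos
  | .cnt φ, _, w, i => by simp only [cnt_eval]; positivity
  | .add t u, hpos, w, i => by
      have h1 := term_nonneg t hpos.1 w i
      have h2 := term_nonneg u hpos.2 w i
      simp only [CTerm.eval]; omega
  | .smul a t, hpos, w, i => by
      have h1 := term_nonneg t hpos.2 w i
      simp only [CTerm.eval]
      exact mul_nonneg hpos.1 h1

end AuxDev

section AuxDev2
variable {α : Type} [DecidableEq α]

lemma list_any_congr {l : List ℕ} {f g : ℕ → Bool} (h : ∀ x ∈ l, f x = g x) :
    l.any f = l.any g := by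
  induction l with
  | nil => rfl
  | cons a l ih => simp_all [List.any_cons]

lemma list_all_congr {l : List ℕ} {f g : ℕ → Bool} (h : ∀ x ∈ l, f x = g x) :
    l.all f = l.all g := by
  induction l with
  | nil => rfl
  | cons a l ih => simp_all [List.all_cons]

mutual
theorem evalF_prefix (w v : List α) : ∀ (φ : CForm α) (j : ℕ), 1 ≤ j →
    (∀ i, i < j → w[i]? = v[i]?) → φ.eval w j = φ.eval v j
  | .sym a, j, hj, h => by
      simp only [CForm.eval]
      rw [h (j-1) (by omega)]
  | .not φ, j, hj, h => by
      simp only [CForm.eval, evalF_prefix w v φ j hj h]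
  | .and φ ψ, j, hj, h => by
      simp only [CForm.eval, evalF_prefix w v φ j hj h, evalF_prefix w v ψ j hj h]
  | .prev φ, j, hj, h => by
      simp only [CForm.eval]
      apply list_any_congr
      intro x hx
      simp only [List.mem_filter, List.mem_range, decide_eq_true_eq] at hx
      exact evalF_prefix w v φ x (by omega) (fun i hi => h i (by omega))
  | .hist φ, j, hj, h => by
      simp only [CForm.eval]
      apply list_all_congr
      intro x hx
      simp only [List.mem_filter, List.mem_range, decide_eq_true_eq] at hx
      exact evalF_prefix w v φ x (by omega) (fun i hi => h i (by omega))
  | .cmp t op k, j, hj, h => by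
      simp only [CForm.eval, evalT_prefix w v t j (fun i hi => h i hi)]

theorem evalT_prefix (w v : List α) : ∀ (t : CTerm α) (j : ℕ),
    (∀ i, i < j → w[i]? = v[i]?) → t.eval w j = t.eval v j
  | .const c, j, h => rfl
  | .cnt φ, j, h => by
      simp only [cnt_eval]
      norm_cast
      unfold cntN
      apply List.countP_congr
      intro x hx
      simp only [List.mem_filter, List.mem_range, decide_eq_true_eq] at hx
      rw [evalF_prefix w v φ x (by omega) (fun i hi => h i (by omega))]
  | .add t u, j, h => by
      simp only [CTerm.eval, evalT_prefix w v t j h, evalT_prefix w v u j h]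
  | .smul a t, j, h => by
      simp only [CTerm.eval, evalT_prefix w v t j h]
end

end AuxDev2

section AuxDev3
variable {α : Type} [DecidableEq α]

mutual
def GoodF [DecidableEq α] (w : List α) (p : ℕ) (K : ℤ) : CForm α → Prop
  | .sym _ => True
  | .not φ => GoodF w p K φ
  | .and φ ψ => GoodF w p K φ ∧ GoodF w p K ψ
  | .prev _ => False
  | .hist _ => False
  | .cmp t _ k => GoodT w p K t ∧ k < K ∧
      min (t.eval w (p-1)) K = min (t.eval w p) K
def GoodT [DecidableEq α] (w : List α) (p : ℕ) (K : ℤ) : CTerm α → Prop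
  | .const _ => True
  | .cnt φ => GoodF w p K φ
  | .add t u => GoodT w p K t ∧ GoodT w p K u
  | .smul _ t => GoodT w p K t
end

lemma erase_prefix_get (w : List α) (p : ℕ) {i : ℕ} (hi : i < p - 1) :
    (w.eraseIdx (p-1))[i]? = w[i]? := by
  simp only [List.getElem?_eraseIdx, if_pos hi]

mutual
theorem evalF_erase (w : List α) (p : ℕ) (K : ℤ) (hp : 1 ≤ p) :
    ∀ (φ : CForm α), φ.Positive → GoodF w p K φ → ∀ j, p ≤ j →
      φ.eval (w.eraseIdx (p-1)) j = φ.eval w (j+1)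
  | .sym a, _, _, j, hj => by
      simp only [CForm.eval, List.getElem?_eraseIdx]
      rw [if_neg (by omega)]
      congr 2
      omega
  | .not φ, hpos, hgood, j, hj => by
      simp only [CForm.eval, evalF_erase w p K hp φ hpos hgood j hj]
  | .and φ ψ, hpos, hgood, j, hj => by
      simp only [CForm.eval, evalF_erase w p K hp φ hpos.1 hgood.1 j hj,
        evalF_erase w p K hp ψ hpos.2 hgood.2 j hj]
  | .cmp t op k, hpos, hgood, j, hj => by
      obtain ⟨hgt, hk, hmin⟩ := hgood
      have hst := evalT_erase w p K hp t hpos.1 hgt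
      have hmono := term_mono t hpos.1 w (show p - 1 ≤ p by omega)
      have hepm1 : t.eval (w.eraseIdx (p-1)) (p-1) = t.eval w (p-1) := by
        have := hst (p-1) le_rfl
        have hpp : p - 1 + 1 = p := by omega
        rw [hpp] at this
        omega
      have hstj := hst j (by omega)
      simp only [CForm.eval]
      rcases eq_or_lt_of_le hmono with heq | hlt
      · rw [show t.eval (w.eraseIdx (p-1)) j = t.eval w (j+1) by omega]
      · have hKa : K ≤ t.eval w (p-1) := by
          by_contra hc
          push_neg at hc
          rw [min_eq_left hc.le] at hmin
          have : t.eval w (p-1) < min (t.eval w p) K := lt_min hlt hc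
          omega
        have h1 : K ≤ t.eval (w.eraseIdx (p-1)) j := by
          have := term_mono t hpos.1 (w.eraseIdx (p-1)) (show p - 1 ≤ j by omega)
          omega
        have h2 : K ≤ t.eval w (j+1) := by
          have := term_mono t hpos.1 w (show p - 1 ≤ j + 1 by omega)
          omega
        cases op <;> simp only [CmpOp.holds] <;> rw [decide_eq_decide] <;> omega

theorem evalT_erase (w : List α) (p : ℕ) (K : ℤ) (hp : 1 ≤ p) :
    ∀ (t : CTerm α), t.Positive → GoodT w p K t → ∀ j, p - 1 ≤ j →
      t.eval (w.eraseIdx (p-1)) j + t.eval w p = t.eval w (j+1) + t.eval w (p-1)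
  | .const c, _, _, j, hj => by simp only [CTerm.eval]
  | .add t u, hpos, hgood, j, hj => by
      have h1 := evalT_erase w p K hp t hpos.1 hgood.1 j hj
      have h2 := evalT_erase w p K hp u hpos.2 hgood.2 j hj
      simp only [CTerm.eval]; omega
  | .smul a t, hpos, hgood, j, hj => by
      have h1 := evalT_erase w p K hp t hpos.2 hgood j hj
      simp only [CTerm.eval]
      linear_combination a * h1
  | .cnt φ, hpos, hgood, j, hj => by
      simp only [cnt_eval]
      have key : ∀ j, p - 1 ≤ j →
          cntN φ (w.eraseIdx (p-1)) j + cntN φ w p = cntN φ w (j+1) + cntN φ w (p-1) := by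
        intro j hj
        induction j with
        | zero =>
            have hp1 : p = 1 := by omega
            subst hp1
            simp [cntN, List.filter]
        | succ n ih =>
            rcases Nat.lt_or_ge n (p-1) with hn | hn
            · -- n + 1 = p - 1 is impossible unless n+1 = p-1; base case n+1 = p-1
              have hnp : n + 1 = p - 1 := by omega
              have hbase : cntN φ (w.eraseIdx (p-1)) (n+1) = cntN φ w (n+1) := by
                unfold cntN
                apply List.countP_congr
                intro x hx
                simp only [List.mem_filter, List.mem_range, decide_eq_true_eq] at hx
                rw [evalF_prefix (w.eraseIdx (p-1)) w φ x (by omega)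
                  (fun i hi => erase_prefix_get w p (by omega))]
              rw [hbase, hnp, show p - 1 + 1 = p by omega]
              omega
            · have ihh := ih hn
              rw [cntN_succ φ (w.eraseIdx (p-1)) n, cntN_succ φ w (n+1)]
              have heq : φ.eval (w.eraseIdx (p-1)) (n+1) = φ.eval w (n+1+1) :=
                evalF_erase w p K hp φ hpos hgood (n+1) (by omega)
              rw [heq]
              omega
      have := key j hj
      push_cast
      omega
end

end AuxDev3

section AuxDev4
variable {α : Type} [DecidableEq α]

mutual
def capF [DecidableEq α] (w : List α) (K : ℤ) : CForm α → ℕ → ℤ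
  | .sym _, _ => 0
  | .not φ, j => capF w K φ j
  | .and φ ψ, j => capF w K φ j + capF w K ψ j
  | .prev _, _ => 0
  | .hist _, _ => 0
  | .cmp t _ _, j => capT w K t j + min (t.eval w j) K
def capT [DecidableEq α] (w : List α) (K : ℤ) : CTerm α → ℕ → ℤ
  | .const _, _ => 0
  | .cnt φ, j => capF w K φ j
  | .add t u, j => capT w K t j + capT w K u j
  | .smul _ t, j => capT w K t j
end

mutual
theorem capF_mono (w : List α) (K : ℤ) : ∀ (φ : CForm α), φ.Positive →
    ∀ {i i' : ℕ}, i ≤ i' → capF w K φ i ≤ capF w K φ i'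
  | .sym _, _, i, i', h => le_refl _
  | .not φ, hpos, i, i', h => capF_mono w K φ hpos h
  | .and φ ψ, hpos, i, i', h =>
      add_le_add (capF_mono w K φ hpos.1 h) (capF_mono w K ψ hpos.2 h)
  | .prev _, hpos, i, i', h => absurd hpos (by simp [CForm.Positive])
  | .hist _, hpos, i, i', h => absurd hpos (by simp [CForm.Positive])
  | .cmp t op k, hpos, i, i', h =>
      add_le_add (capT_mono w K t hpos.1 h)
        (min_le_min (term_mono t hpos.1 w h) le_rfl)
theorem capT_mono (w : List α) (K : ℤ) : ∀ (t : CTerm α), t.Positive →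
    ∀ {i i' : ℕ}, i ≤ i' → capT w K t i ≤ capT w K t i'
  | .const _, _, i, i', h => le_refl _
  | .cnt φ, hpos, i, i', h => capF_mono w K φ hpos h
  | .add t u, hpos, i, i', h =>
      add_le_add (capT_mono w K t hpos.1 h) (capT_mono w K u hpos.2 h)
  | .smul a t, hpos, i, i', h => capT_mono w K t hpos.2 h
end

mutual
theorem capF_nonneg (w : List α) (K : ℤ) (hK : 0 ≤ K) : ∀ (φ : CForm α), φ.Positive →
    ∀ (j : ℕ), 0 ≤ capF w K φ j
  | .sym _, _, j => le_refl _
  | .not φ, hpos, j => capF_nonneg w K hK φ hpos j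
  | .and φ ψ, hpos, j =>
      add_nonneg (capF_nonneg w K hK φ hpos.1 j) (capF_nonneg w K hK ψ hpos.2 j)
  | .prev _, hpos, j => absurd hpos (by simp [CForm.Positive])
  | .hist _, hpos, j => absurd hpos (by simp [CForm.Positive])
  | .cmp t op k, hpos, j =>
      add_nonneg (capT_nonneg w K hK t hpos.1 j)
        (le_min (term_nonneg t hpos.1 w j) hK)
theorem capT_nonneg (w : List α) (K : ℤ) (hK : 0 ≤ K) : ∀ (t : CTerm α), t.Positive →
    ∀ (j : ℕ), 0 ≤ capT w K t j
  | .const _, _, j => le_refl _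
  | .cnt φ, hpos, j => capF_nonneg w K hK φ hpos j
  | .add t u, hpos, j =>
      add_nonneg (capT_nonneg w K hK t hpos.1 j) (capT_nonneg w K hK u hpos.2 j)
  | .smul a t, hpos, j => capT_nonneg w K hK t hpos.2 j
end

mutual
theorem capF_le (w : List α) (K : ℤ) (hK : 0 ≤ K) : ∀ (φ : CForm α) (j : ℕ),
    capF w K φ j ≤ (φ.size : ℤ) * K
  | .sym _, j => by simp [capF, CForm.size]; positivity
  | .not φ, j => by
      have := capF_le w K hK φ j
      simp only [capF, CForm.size]; push_cast; linarith
  | .and φ ψ, j => by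
      have h1 := capF_le w K hK φ j
      have h2 := capF_le w K hK ψ j
      simp only [capF, CForm.size]; push_cast; linarith
  | .prev φ, j => by
      simp only [capF, CForm.size]; positivity
  | .hist φ, j => by
      simp only [capF, CForm.size]; positivity
  | .cmp t op k, j => by
      have h1 := capT_le w K hK t j
      have h2 : min (t.eval w j) K ≤ K := min_le_right _ _
      simp only [capF, CForm.size]; push_cast
      have : (0:ℤ) ≤ (zsize k : ℤ) * K := by positivity
      linarith
theorem capT_le (w : List α) (K : ℤ) (hK : 0 ≤ K) : ∀ (t : CTerm α) (j : ℕ),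
    capT w K t j ≤ (t.size : ℤ) * K
  | .const c, j => by simp only [capT, CTerm.size]; positivity
  | .cnt φ, j => by
      have := capF_le w K hK φ j
      simp only [capT, CTerm.size]; push_cast; linarith
  | .add t u, j => by
      have h1 := capT_le w K hK t j
      have h2 := capT_le w K hK u j
      simp only [capT, CTerm.size]; push_cast; linarith
  | .smul a t, j => by
      have h1 := capT_le w K hK t j
      have : (0:ℤ) ≤ (zsize a : ℤ) * K := by positivity
      simp only [capT, CTerm.size]; push_cast; linarith
end

lemma zsize_lt (k : ℤ) (hk : 0 ≤ k) : k < 2 ^ zsize k := by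
  have h := Nat.lt_pow_succ_log_self (b := 2) (by norm_num) k.natAbs
  have : k = (k.natAbs : ℤ) := (Int.natAbs_of_nonneg hk).symm
  rw [this]
  unfold zsize
  exact_mod_cast h

mutual
theorem capF_stable (w : List α) (p : ℕ) (K : ℤ) : ∀ (φ : CForm α), φ.Positive →
    (2:ℤ) ^ φ.prec ≤ K → capF w K φ (p-1) = capF w K φ p → GoodF w p K φ
  | .sym _, _, _, _ => trivial
  | .not φ, hpos, hK, hstab => by
      show GoodF w p K φ
      exact capF_stable w p K φ hpos hK hstab
  | .and φ ψ, hpos, hK, hstab => by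
      have m1 := capF_mono w K φ hpos.1 (show p - 1 ≤ p by omega)
      have m2 := capF_mono w K ψ hpos.2 (show p - 1 ≤ p by omega)
      simp only [capF] at hstab
      have hKm : (2:ℤ) ^ (max φ.prec ψ.prec) ≤ K := by simpa [CForm.prec] using hK
      have hK1 : (2:ℤ) ^ φ.prec ≤ K :=
        le_trans (pow_le_pow_right₀ (by norm_num) (le_max_left _ _)) hKm
      have hK2 : (2:ℤ) ^ ψ.prec ≤ K :=
        le_trans (pow_le_pow_right₀ (by norm_num) (le_max_right _ _)) hKm
      exact ⟨capF_stable w p K φ hpos.1 hK1 (by omega),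
             capF_stable w p K ψ hpos.2 hK2 (by omega)⟩
  | .prev _, hpos, _, _ => absurd hpos (by simp [CForm.Positive])
  | .hist _, hpos, _, _ => absurd hpos (by simp [CForm.Positive])
  | .cmp t op k, hpos, hK, hstab => by
      have m1 := capT_mono w K t hpos.1 (show p - 1 ≤ p by omega)
      have m2 : min (t.eval w (p-1)) K ≤ min (t.eval w p) K :=
        min_le_min (term_mono t hpos.1 w (show p - 1 ≤ p by omega)) le_rfl
      simp only [capF] at hstab
      have hKcmp : max ((2:ℤ)^t.prec) ((2:ℤ)^(zsize k)) ≤ K := by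
        have : (2:ℤ) ^ max t.prec (zsize k) ≤ K := by simpa [CForm.prec] using hK
        refine max_le (le_trans ?_ this) (le_trans ?_ this) <;>
          exact pow_le_pow_right₀ (by norm_num) (by omega)
      refine ⟨capT_stable w p K t hpos.1 (le_trans (le_max_left _ _) hKcmp) (by omega),
        ?_, by omega⟩
      have := zsize_lt k hpos.2
      have := le_trans (le_max_right _ _) hKcmp
      omega
theorem capT_stable (w : List α) (p : ℕ) (K : ℤ) : ∀ (t : CTerm α), t.Positive →
    (2:ℤ) ^ t.prec ≤ K → capT w K t (p-1) = capT w K t p → GoodT w p K t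
  | .const _, _, _, _ => trivial
  | .cnt φ, hpos, hK, hstab => by
      show GoodF w p K φ
      exact capF_stable w p K φ hpos (by simpa [CTerm.prec] using hK) hstab
  | .add t u, hpos, hK, hstab => by
      have m1 := capT_mono w K t hpos.1 (show p - 1 ≤ p by omega)
      have m2 := capT_mono w K u hpos.2 (show p - 1 ≤ p by omega)
      simp only [capT] at hstab
      have hKm : (2:ℤ) ^ (max t.prec u.prec) ≤ K := by simpa [CTerm.prec] using hK
      have hK1 : (2:ℤ) ^ t.prec ≤ K :=
        le_trans (pow_le_pow_right₀ (by norm_num) (le_max_left _ _)) hKm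
      have hK2 : (2:ℤ) ^ u.prec ≤ K :=
        le_trans (pow_le_pow_right₀ (by norm_num) (le_max_right _ _)) hKm
      exact ⟨capT_stable w p K t hpos.1 hK1 (by omega),
             capT_stable w p K u hpos.2 hK2 (by omega)⟩
  | .smul a t, hpos, hK, hstab => by
      show GoodT w p K t
      have hKm : (2:ℤ) ^ (max (zsize a) t.prec) ≤ K := by simpa [CTerm.prec] using hK
      exact capT_stable w p K t hpos.2
        (le_trans (pow_le_pow_right₀ (by norm_num) (le_max_right _ _)) hKm) hstab
end

mutual
theorem precF_le_size : ∀ (φ : CForm α), φ.prec ≤ φ.size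
  | .sym _ => by simp [CForm.prec, CForm.size]
  | .not φ => by
      have := precF_le_size φ
      simp only [CForm.prec, CForm.size]; omega
  | .and φ ψ => by
      have h1 := precF_le_size φ
      have h2 := precF_le_size ψ
      simp only [CForm.prec, CForm.size]; omega
  | .prev φ => by
      have := precF_le_size φ
      simp only [CForm.prec, CForm.size]; omega
  | .hist φ => by
      have := precF_le_size φ
      simp only [CForm.prec, CForm.size]; omega
  | .cmp t op k => by
      have := precT_le_size t
      simp only [CForm.prec, CForm.size]; omega
theorem precT_le_size : ∀ (t : CTerm α), t.prec ≤ t.size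
  | .const c => by simp only [CTerm.prec, CTerm.size]; omega
  | .cnt φ => by
      have := precF_le_size φ
      simp only [CTerm.prec, CTerm.size]; omega
  | .add t u => by
      have h1 := precT_le_size t
      have h2 := precT_le_size u
      simp only [CTerm.prec, CTerm.size]; omega
  | .smul a t => by
      have := precT_le_size t
      simp only [CTerm.prec, CTerm.size]; omega
end

end AuxDev4

/-- Two positive C-RASP programs with different languages are distinguished by a string
(in the symmetric difference of their languages) of length at most exponential in the
sum of their sizes. -/
theorem crasp_pos_distinguishing_string :
    ∃ c : ℕ, ∀ (α : Type) [DecidableEq α] (P P' : CForm α),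
      P.Positive → P'.Positive → CForm.lang P ≠ CForm.lang P' →
      ∃ w : List α, (w ∈ CForm.lang P ↔ w ∉ CForm.lang P') ∧
        w.length ≤ 2 ^ (c * (P.size + P'.size + 1) ^ c) := by
  use 2
  intro α _ P P' hP hP' hne
  classical
  set s : ℕ := P.size + P'.size with hs
  set K : ℤ := 2 ^ s with hKdef
  have hK0 : (0:ℤ) ≤ K := by positivity
  set B : ℕ := s * 2 ^ s + 1 with hB
  have hBZ : (B:ℤ) = (s:ℤ) * K + 1 := by push_cast [hB, hKdef]; ring
  have hKP : (2:ℤ) ^ P.prec ≤ K := by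
    rw [hKdef]
    apply pow_le_pow_right₀ (by norm_num)
    have := precF_le_size P; omega
  have hKP' : (2:ℤ) ^ P'.prec ≤ K := by
    rw [hKdef]
    apply pow_le_pow_right₀ (by norm_num)
    have := precF_le_size P'; omega
  have hdist : ∃ w : List α, (w ∈ CForm.lang P ↔ w ∉ CForm.lang P') := by
    by_contra hc
    push_neg at hc
    apply hne
    ext w
    have := hc w
    tauto
  have key : ∀ n : ℕ, ∀ w : List α, (w ∈ CForm.lang P ↔ w ∉ CForm.lang P') →
      w.length = n → ∃ v : List α, (v ∈ CForm.lang P ↔ v ∉ CForm.lang P') ∧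
        v.length ≤ B := by
    intro n
    induction n using Nat.strong_induction_on with
    | _ n IH =>
      intro w hw hlen
      by_cases hsmall : w.length ≤ B
      · exact ⟨w, hw, hsmall⟩
      push_neg at hsmall
      have hBn : B < n := by omega
      have hn1 : 1 ≤ n := by omega
      have hFmono : ∀ {i i' : ℕ}, i ≤ i' →
          capF w K P i + capF w K P' i ≤ capF w K P i' + capF w K P' i' :=
        fun h => add_le_add (capF_mono w K P hP h) (capF_mono w K P' hP' h)
      have hex : ∃ p, 1 ≤ p ∧ p ≤ n - 1 ∧
          capF w K P (p-1) + capF w K P' (p-1) = capF w K P p + capF w K P' p := by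
        by_contra hc
        push_neg at hc
        have grow : ∀ m, m ≤ n - 1 →
            (m:ℤ) ≤ (capF w K P m + capF w K P' m) - (capF w K P 0 + capF w K P' 0) := by
          intro m
          induction m with
          | zero => intro _; simp
          | succ q ihq =>
            intro hq
            have h1 := ihq (by omega)
            have h2 := hFmono (show q ≤ q + 1 by omega)
            have h3 := hc (q+1) (by omega) hq
            have h4 : capF w K P q + capF w K P' q ≠
                capF w K P (q+1) + capF w K P' (q+1) := by
              simpa using h3
            have h5 := lt_of_le_of_ne h2 h4
            push_cast
            omega
        have hub := grow (n-1) le_rfl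
        have hF0 : 0 ≤ capF w K P 0 + capF w K P' 0 :=
          add_nonneg (capF_nonneg w K hK0 P hP 0) (capF_nonneg w K hK0 P' hP' 0)
        have hFle : capF w K P (n-1) + capF w K P' (n-1) ≤ (s:ℤ) * K := by
          have e1 := capF_le w K hK0 P (n-1)
          have e2 := capF_le w K hK0 P' (n-1)
          have : ((P.size : ℤ) + (P'.size : ℤ)) = (s:ℤ) := by push_cast [hs]; ring
          nlinarith [e1, e2]
        have hcast : ((n-1:ℕ):ℤ) = (n:ℤ) - 1 := by
          push_cast [Nat.cast_sub hn1]; ring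
        have hBn' : (B:ℤ) < (n:ℤ) := by exact_mod_cast hBn
        rw [hcast] at hub
        rw [hBZ] at hBn'
        linarith
      obtain ⟨p, hp1, hpn, hFp⟩ := hex
      have stabP : capF w K P (p-1) = capF w K P p := by
        have m1 := capF_mono w K P hP (show p - 1 ≤ p by omega)
        have m2 := capF_mono w K P' hP' (show p - 1 ≤ p by omega)
        omega
      have stabP' : capF w K P' (p-1) = capF w K P' p := by
        have m1 := capF_mono w K P hP (show p - 1 ≤ p by omega)
        have m2 := capF_mono w K P' hP' (show p - 1 ≤ p by omega)
        omega
      have goodP := capF_stable w p K P hP hKP stabP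
      have goodP' := capF_stable w p K P' hP' hKP' stabP'
      have hplt : p - 1 < w.length := by omega
      have hlen' : (w.eraseIdx (p-1)).length = n - 1 := by
        rw [List.length_eraseIdx, if_pos hplt, hlen]
      have hevP : P.eval (w.eraseIdx (p-1)) (n-1) = P.eval w n := by
        have := evalF_erase w p K hp1 P hP goodP (n-1) (by omega)
        rwa [show n - 1 + 1 = n by omega] at this
      have hevP' : P'.eval (w.eraseIdx (p-1)) (n-1) = P'.eval w n := by
        have := evalF_erase w p K hp1 P' hP' goodP' (n-1) (by omega)
        rwa [show n - 1 + 1 = n by omega] at this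
      have hmemP : (w.eraseIdx (p-1) ∈ CForm.lang P) ↔ (w ∈ CForm.lang P) := by
        simp only [CForm.lang, Set.mem_setOf_eq, hlen', hlen, hevP]
      have hmemP' : (w.eraseIdx (p-1) ∈ CForm.lang P') ↔ (w ∈ CForm.lang P') := by
        simp only [CForm.lang, Set.mem_setOf_eq, hlen', hlen, hevP']
      exact IH (n-1) (by omega) (w.eraseIdx (p-1))
        (by rw [hmemP, hmemP']; exact hw) hlen'
  obtain ⟨w, hw⟩ := hdist
  obtain ⟨v, hv, hvB⟩ := key w.length w hw rfl
  refine ⟨v, hv, le_trans hvB ?_⟩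
  have h1 : s * 2 ^ s ≤ 2 ^ s * 2 ^ s :=
    Nat.mul_le_mul_right _ (le_of_lt (Nat.lt_two_pow_self (n := s)))
  have h2 : (2:ℕ) ^ s * 2 ^ s = 2 ^ (2*s) := by rw [← pow_add, ← two_mul]
  have h3 : (1:ℕ) ≤ 2 ^ (2*s) := Nat.one_le_two_pow
  have h4 : (2:ℕ) ^ (2*s) + 2 ^ (2*s) = 2 ^ (2*s+1) := by rw [pow_succ]; ring
  have h5 : (2:ℕ) ^ (2*s+1) ≤ 2 ^ (2 * (s + 1) ^ 2) :=
    Nat.pow_le_pow_right (by norm_num) (by nlinarith)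
  have : s * 2 ^ s + 1 ≤ 2 ^ (2 * (s+1) ^ 2) := by omega
  simpa [hB, hs] using this
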